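/- Let 𝒯* ⊆ 𝒯 be an optimal r-test set with m* = |𝒯*| ≥ 1 and let #₀ = r·n(n−1)/2. Then any run of SGA returns an r-test set of size at most (ln #₀ − ln m* + 1)·m*. -/

import Mathlib

open Finset

/-- The set of item pairs: 2-element subsets of the item set `S` (here the whole type `α`). -/
def itemPairs (α : Type*) [Fintype α] [DecidableEq α] : Finset (Finset α) :=
  Finset.univ.filter fun a => a.card = 2

/-- `⊥(a, F)`: the number of tests in the family `F` that differentiate the item pair `a`,
i.e. the tests `T` with `|T ∩ a| = 1`. -/
def diffBy {α : Type*} [DecidableEq α] (a : Finset α) (F : Finset (Finset α)) : ℕ :=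
  (F.filter fun T => (T ∩ a).card = 1).card

/-- `F` is an `r`-test set for the collection `𝒯`: `F ⊆ 𝒯` and every item pair is
differentiated by at least `r` tests of `F`. -/
def IsRTestSet {α : Type*} [Fintype α] [DecidableEq α]
    (r : ℕ) (𝒯 F : Finset (Finset α)) : Prop :=
  F ⊆ 𝒯 ∧ ∀ a ∈ itemPairs α, r ≤ diffBy a F

/-- The differentiation measure `#(T̄) = ∑_a max (r - ⊥(a,T̄), 0)` (truncated subtraction). -/
def dmeasure {α : Type*} [Fintype α] [DecidableEq α]
    (r : ℕ) (F : Finset (Finset α)) : ℕ :=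
  ∑ a ∈ itemPairs α, (r - diffBy a F)

/-- A run of the set cover greedy algorithm SGA: a sequence of distinct tests from `𝒯`,
each chosen greedily to minimize the differentiation measure of the selected family,
selections continue while the measure is positive, and the final measure is `0`. -/
structure SGARun {α : Type*} [Fintype α] [DecidableEq α]
    (r : ℕ) (𝒯 : Finset (Finset α)) (L : List (Finset α)) : Prop where
  nodup : L.Nodup
  mem : ∀ T ∈ L, T ∈ 𝒯
  greedy : ∀ i : Fin L.length, ∀ T ∈ 𝒯, T ∉ (L.take i).toFinset →
      dmeasure r (insert (L.get i) (L.take i).toFinset) ≤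
        dmeasure r (insert T (L.take i).toFinset)
  pos : ∀ i < L.length, 0 < dmeasure r (L.take i).toFinset
  done : dmeasure r L.toFinset = 0

lemma diffBy_mono {α : Type*} [DecidableEq α] (a : Finset α) {F F' : Finset (Finset α)}
    (h : F ⊆ F') : diffBy a F ≤ diffBy a F' :=
  Finset.card_le_card (Finset.filter_subset_filter _ h)

lemma diffBy_union_le {α : Type*} [DecidableEq α] (a : Finset α) (A B : Finset (Finset α)) :
    diffBy a (A ∪ B) ≤ diffBy a A + diffBy a B := by
  unfold diffBy
  rw [Finset.filter_union]
  exact Finset.card_union_le _ _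

lemma diffBy_insert {α : Type*} [DecidableEq α] {T : Finset α} {F : Finset (Finset α)}
    (hT : T ∉ F) (a : Finset α) :
    diffBy a (insert T F) = diffBy a F + (if (T ∩ a).card = 1 then 1 else 0) := by
  unfold diffBy
  rw [Finset.filter_insert]
  split
  · rw [Finset.card_insert_of_notMem (fun h => hT (Finset.mem_of_mem_filter _ h))]
  · simp

lemma key_a {β : Type*} (x : ℕ) (S : Finset β) (c : β → ℕ) (hc : ∀ T, c T ≤ 1)
    (hx : x ≤ ∑ T ∈ S, c T) : (∑ T ∈ S, (x - c T)) + x ≤ S.card * x := by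
  rcases Nat.eq_zero_or_pos x with hx0 | hx1
  · simp [hx0]
  · have h1 : ∀ T ∈ S, (x - c T) + c T = x := fun T _ => by have := hc T; omega
    have h2 : ((∑ T ∈ S, (x - c T)) + ∑ T ∈ S, c T) = S.card * x := by
      rw [← Finset.sum_add_distrib, Finset.sum_congr rfl h1, Finset.sum_const, smul_eq_mul]
    omega

lemma exists_good {α : Type*} [Fintype α] [DecidableEq α] {r : ℕ}
    {Fstar G : Finset (Finset α)}
    (hF : ∀ a ∈ itemPairs α, r ≤ diffBy a Fstar)
    (hpos : 0 < dmeasure r G) :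
    ∃ T ∈ Fstar, T ∉ G ∧
      Fstar.card * dmeasure r (insert T G) ≤ (Fstar.card - 1) * dmeasure r G := by
  classical
  set S := Fstar \ G with hSdef
  set m := Fstar.card with hmdef
  have step1 : ∀ a ∈ itemPairs α, r - diffBy a G ≤ diffBy a S := by
    intro a ha
    have h1 : diffBy a Fstar ≤ diffBy a (S ∪ G) := by
      apply diffBy_mono
      intro T hT
      by_cases hTG : T ∈ G
      · exact Finset.mem_union_right _ hTG
      · exact Finset.mem_union_left _ (Finset.mem_sdiff.mpr ⟨hT, hTG⟩)
    have h2 := diffBy_union_le a S G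
    have h3 := hF a ha
    omega
  have claim : (∑ T ∈ S, dmeasure r (insert T G)) + dmeasure r G ≤ S.card * dmeasure r G := by
    have expand : ∀ T ∈ S, dmeasure r (insert T G) =
        ∑ a ∈ itemPairs α, ((r - diffBy a G) - (if (T ∩ a).card = 1 then 1 else 0)) := by
      intro T hT
      have hTG : T ∉ G := (Finset.mem_sdiff.mp hT).2
      unfold dmeasure
      refine Finset.sum_congr rfl fun a _ => ?_
      rw [diffBy_insert hTG]
      omega
    calc (∑ T ∈ S, dmeasure r (insert T G)) + dmeasure r G
        = (∑ a ∈ itemPairs α,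
            ∑ T ∈ S, ((r - diffBy a G) - (if (T ∩ a).card = 1 then 1 else 0)))
            + dmeasure r G := by rw [Finset.sum_congr rfl expand, Finset.sum_comm]
      _ = ∑ a ∈ itemPairs α,
            ((∑ T ∈ S, ((r - diffBy a G) - (if (T ∩ a).card = 1 then 1 else 0)))
              + (r - diffBy a G)) := by rw [dmeasure, Finset.sum_add_distrib]
      _ ≤ ∑ a ∈ itemPairs α, S.card * (r - diffBy a G) := by
          refine Finset.sum_le_sum fun a ha => key_a _ _ _ (fun T => by split <;> omega) ?_
          rw [← Finset.card_filter]
          exact step1 a ha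
      _ = S.card * dmeasure r G := by rw [dmeasure, Finset.mul_sum]
  rcases S.eq_empty_or_nonempty with hSe | hSne
  · rw [hSe] at claim
    simp at claim
    omega
  by_contra hcon
  push_neg at hcon
  have hall : ∀ T ∈ S, (m - 1) * dmeasure r G + 1 ≤ m * dmeasure r (insert T G) := by
    intro T hT
    rcases Finset.mem_sdiff.mp hT with ⟨h1, h2⟩
    have := hcon T h1 h2
    omega
  have hsum : S.card * ((m - 1) * dmeasure r G + 1)
      ≤ m * ∑ T ∈ S, dmeasure r (insert T G) := by
    calc S.card * ((m - 1) * dmeasure r G + 1)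
        = ∑ _T ∈ S, ((m - 1) * dmeasure r G + 1) := by
          rw [Finset.sum_const, smul_eq_mul]
      _ ≤ ∑ T ∈ S, m * dmeasure r (insert T G) := Finset.sum_le_sum hall
      _ = m * ∑ T ∈ S, dmeasure r (insert T G) := (Finset.mul_sum _ _ _).symm
  have hsle : S.card ≤ m := Finset.card_le_card Finset.sdiff_subset
  have hs1 : 1 ≤ S.card := Finset.card_pos.mpr hSne
  have h2 : m * ((∑ T ∈ S, dmeasure r (insert T G)) + dmeasure r G)
      ≤ m * (S.card * dmeasure r G) := Nat.mul_le_mul_left _ claim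
  set s := S.card
  set d := dmeasure r G
  set A := ∑ T ∈ S, dmeasure r (insert T G)
  have hm1 : 1 ≤ m := le_trans hs1 hsle
  zify [hm1] at hsum h2
  nlinarith [hsum, h2, hpos, hs1, hsle, hm1,
    mul_nonneg (sub_nonneg.mpr ((Int.ofNat_le.mpr hsle) : (s : ℤ) ≤ m))
      (by exact_mod_cast Nat.zero_le d : (0:ℤ) ≤ d)]

lemma take_toFinset_succ {β : Type*} [DecidableEq β] (L : List β) (i : ℕ) (hi : i < L.length) :
    (L.take (i+1)).toFinset = insert (L.get ⟨i, hi⟩) (L.take i).toFinset := by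
  have h : L[i]? = some (L.get ⟨i, hi⟩) := by
    rw [List.getElem?_eq_getElem hi]
    rfl
  rw [List.take_succ, h, Option.toList_some, List.toFinset_append]
  rw [Finset.union_comm]
  simp

/-- any run of SGA returns an `r`-test set of size at most
`(ln #₀ − ln m* + 1)·m*`. -/
theorem stmt_10 {α : Type*} [Fintype α] [DecidableEq α]
    (r : ℕ) (hr : 1 ≤ r) (hn : 2 ≤ Fintype.card α)
    (𝒯 Fstar : Finset (Finset α)) (hFstar : IsRTestSet r 𝒯 Fstar)
    (hopt : ∀ F : Finset (Finset α), IsRTestSet r 𝒯 F → Fstar.card ≤ F.card)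
    (hm : 1 ≤ Fstar.card)
    (N0 : ℝ)
    (hN0 : N0 = (r : ℝ) * (Fintype.card α) * ((Fintype.card α : ℝ) - 1) / 2)
    (L : List (Finset α)) (hrun : SGARun r 𝒯 L) :
    (L.length : ℝ) ≤
      (Real.log N0 - Real.log (Fstar.card : ℝ) + 1) * (Fstar.card : ℝ) := by
  classical
  set n := Fintype.card α with hn'
  set m := Fstar.card with hmm
  set k := L.length with hk
  set D : ℕ → ℕ := fun i => dmeasure r ((L.take i).toFinset) with hD
  -- cardinality of itemPairs
  have hpc : (itemPairs α).card = n.choose 2 := by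
    rw [itemPairs, ← Finset.powerset_univ, ← Finset.powersetCard_eq_filter,
      Finset.card_powersetCard, Finset.card_univ]
  -- D 0 = r * card itemPairs
  have hD0 : D 0 = r * (itemPairs α).card := by
    have : diffBy (α := α) = diffBy := rfl
    simp only [hD, List.take_zero, List.toFinset_nil, dmeasure]
    have h0 : ∀ a ∈ itemPairs α, r - diffBy a (∅ : Finset (Finset α)) = r := by
      intro a _
      simp [diffBy]
    rw [Finset.sum_congr rfl h0, Finset.sum_const, smul_eq_mul, mul_comm]
  -- N0 as a nat cast
  have hdvd : 2 ∣ n * (n - 1) := by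
    rcases Nat.even_or_odd n with he | ho
    · exact Dvd.dvd.mul_right he.two_dvd _
    · have : Even (n - 1) := Nat.Odd.sub_odd ho odd_one
      exact Dvd.dvd.mul_left this.two_dvd _
  have hN0nat : ((r * (itemPairs α).card : ℕ) : ℝ) = N0 := by
    rw [hpc, Nat.choose_two_right, Nat.cast_mul,
      Nat.cast_div hdvd (by norm_num), Nat.cast_mul,
      Nat.cast_sub (by omega : 1 ≤ n), hN0]
    push_cast
    ring
  -- greedy key step
  have hDsucc : ∀ i < k, m * D (i + 1) ≤ (m - 1) * D i := by
    intro i hi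
    have hpos : 0 < D i := hrun.pos i hi
    obtain ⟨T, hTF, hTG, hineq⟩ := exists_good (r := r) (G := (L.take i).toFinset)
      hFstar.2 hpos
    have hgr := hrun.greedy ⟨i, hi⟩ T (hFstar.1 hTF) hTG
    have heq : D (i + 1) = dmeasure r (insert (L.get ⟨i, hi⟩) (L.take i).toFinset) := by
      rw [hD]
      simp only
      rw [take_toFinset_succ L i hi]
    rw [heq]
    calc m * dmeasure r (insert (L.get ⟨i, hi⟩) (L.take i).toFinset)
        ≤ m * dmeasure r (insert T (L.take i).toFinset) := Nat.mul_le_mul_left _ hgr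
      _ ≤ (m - 1) * D i := hineq
  -- strict decrease
  have hstrict : ∀ i < k, D (i + 1) < D i := by
    intro i hi
    have h1 := hDsucc i hi
    have hpos : 0 < D i := hrun.pos i hi
    by_contra hcon
    push_neg at hcon
    have h2 : m * D i ≤ m * D (i + 1) := Nat.mul_le_mul_left _ hcon
    rw [Nat.sub_one_mul] at h1
    have h5 : m * D i ≤ m * D i - D i := le_trans h2 h1
    have h6 : m * D i - D i < m * D i := Nat.sub_lt (Nat.mul_pos hm hpos) hpos
    exact absurd h5 (not_le.mpr h6)
  -- D i ≥ k - i
  have fact3 : ∀ j i, i + j ≤ k → j ≤ D i := by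
    intro j
    induction j with
    | zero => intro i _; omega
    | succ j ih =>
      intro i hij
      have hi : i < k := by omega
      have h1 := hstrict i hi
      have h2 := ih (i + 1) (by omega)
      omega
  -- r-test set from the run
  have hLts : IsRTestSet r 𝒯 L.toFinset := by
    constructor
    · intro T hT
      exact hrun.mem T (List.mem_toFinset.mp hT)
    · intro a ha
      have h0 := hrun.done
      rw [dmeasure, Finset.sum_eq_zero_iff] at h0
      have := h0 a ha
      omega
  have hmk : m ≤ k := by
    have := hopt L.toFinset hLts
    rwa [List.toFinset_card_of_nodup hrun.nodup] at this
  have hmN0 : m ≤ r * (itemPairs α).card := by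
    rw [← hD0]
    exact le_trans hmk (fact3 k 0 (by omega))
  -- exponential decay
  have hm0R : (0 : ℝ) < m := by exact_mod_cast hm
  set q : ℝ := ((m : ℝ) - 1) / m with hq
  have hq0 : (0 : ℝ) ≤ q := by
    apply div_nonneg _ (le_of_lt hm0R)
    have : (1 : ℝ) ≤ m := by exact_mod_cast hm
    linarith
  have hN0pos : (0 : ℝ) < N0 := by
    rw [← hN0nat]
    have : 1 ≤ r * (itemPairs α).card := le_trans hm hmN0
    exact_mod_cast this
  have hexp : ∀ i, i ≤ k → (D i : ℝ) ≤ N0 * q ^ i := by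
    intro i
    induction i with
    | zero =>
      intro _
      rw [hD0, hN0nat]
      simp
    | succ i ih =>
      intro hik
      have hi : i < k := by omega
      have h1 := hDsucc i hi
      have h1R : (m : ℝ) * D (i + 1) ≤ ((m : ℝ) - 1) * D i := by
        have hcast : ((m - 1 : ℕ) : ℝ) = (m : ℝ) - 1 := by
          rw [Nat.cast_sub hm]; simp
        calc (m : ℝ) * D (i + 1) = ((m * D (i + 1) : ℕ) : ℝ) := by push_cast; ring
          _ ≤ (((m - 1) * D i : ℕ) : ℝ) := by exact_mod_cast h1
          _ = ((m : ℝ) - 1) * D i := by rw [Nat.cast_mul, hcast]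
      have h2 : (D (i + 1) : ℝ) ≤ q * D i := by
        rw [hq, div_mul_eq_mul_div, le_div_iff₀ hm0R]
        linarith
      calc (D (i + 1) : ℝ) ≤ q * D i := h2
        _ ≤ q * (N0 * q ^ i) := mul_le_mul_of_nonneg_left (ih (le_of_lt hi)) hq0
        _ = N0 * q ^ (i + 1) := by ring
  -- define t = first index with D t < m
  have hex : ∃ i, D i < m := by
    refine ⟨k, ?_⟩
    have : D k = 0 := by
      rw [hD]
      simp only
      rw [List.take_of_length_le (le_refl _)]
      exact hrun.done
    omega
  set t := Nat.find hex with ht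
  have hDt : D t < m := Nat.find_spec hex
  have htmin : ∀ i < t, m ≤ D i := fun i hi => le_of_not_gt (Nat.find_min hex hi)
  have ht1 : 1 ≤ t := by
    rcases Nat.eq_zero_or_pos t with h0 | h1
    · exfalso
      rw [h0] at hDt
      rw [hD0] at hDt
      omega
    · exact h1
  have htk : t ≤ k := by
    by_contra hcon
    push_neg at hcon
    have := htmin k hcon
    have hDk : D k = 0 := by
      rw [hD]
      simp only
      rw [List.take_of_length_le (le_refl _)]
      exact hrun.done
    omega
  have hkt : k ≤ t + (m - 1) := by
    have h1 := fact3 (k - t) t (by omega)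
    omega
  -- real estimate on t
  have hDt1 : (m : ℝ) ≤ D (t - 1) := by
    have := htmin (t - 1) (by omega)
    exact_mod_cast this
  have hDt1exp : (D (t - 1) : ℝ) ≤ N0 * q ^ (t - 1) := hexp (t - 1) (by omega)
  have hqexp : q ≤ Real.exp (-(1 / (m : ℝ))) := by
    have h1 := Real.add_one_le_exp (-(1 / (m : ℝ)))
    have h2 : q = -(1 / (m : ℝ)) + 1 := by
      rw [hq]
      field_simp
      ring
    linarith
  have hqpow : q ^ (t - 1) ≤ Real.exp (-(((t - 1 : ℕ) : ℝ) / m)) := by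
    have h1 : q ^ (t - 1) ≤ Real.exp (-(1 / (m : ℝ))) ^ (t - 1) :=
      pow_le_pow_left₀ hq0 hqexp _
    have h2 : Real.exp (-(1 / (m : ℝ))) ^ (t - 1)
        = Real.exp (((t - 1 : ℕ) : ℝ) * (-(1 / (m : ℝ)))) := (Real.exp_nat_mul _ _).symm
    rw [h2] at h1
    have h3 : ((t - 1 : ℕ) : ℝ) * (-(1 / (m : ℝ))) = -(((t - 1 : ℕ) : ℝ) / m) := by
      field_simp
    rwa [h3] at h1
  have hchain : (m : ℝ) ≤ N0 * Real.exp (-(((t - 1 : ℕ) : ℝ) / m)) := by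
    calc (m : ℝ) ≤ D (t - 1) := hDt1
      _ ≤ N0 * q ^ (t - 1) := hDt1exp
      _ ≤ N0 * Real.exp (-(((t - 1 : ℕ) : ℝ) / m)) :=
          mul_le_mul_of_nonneg_left hqpow (le_of_lt hN0pos)
  have hmexp : (m : ℝ) * Real.exp (((t - 1 : ℕ) : ℝ) / m) ≤ N0 := by
    have hE : (0 : ℝ) < Real.exp (((t - 1 : ℕ) : ℝ) / m) := Real.exp_pos _
    rw [Real.exp_neg] at hchain
    calc (m : ℝ) * Real.exp (((t - 1 : ℕ) : ℝ) / m)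
        ≤ (N0 * (Real.exp (((t - 1 : ℕ) : ℝ) / m))⁻¹) * Real.exp (((t - 1 : ℕ) : ℝ) / m) :=
          mul_le_mul_of_nonneg_right hchain (le_of_lt hE)
      _ = N0 := by field_simp
  have hlog : Real.log (m : ℝ) + ((t - 1 : ℕ) : ℝ) / m ≤ Real.log N0 := by
    have h1 : Real.log ((m : ℝ) * Real.exp (((t - 1 : ℕ) : ℝ) / m)) ≤ Real.log N0 :=
      Real.log_le_log (by positivity) hmexp
    rwa [Real.log_mul (ne_of_gt hm0R) (ne_of_gt (Real.exp_pos _)), Real.log_exp] at h1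
  have htbound : ((t - 1 : ℕ) : ℝ) ≤ (Real.log N0 - Real.log (m : ℝ)) * m := by
    have h2 : ((t - 1 : ℕ) : ℝ) / m ≤ Real.log N0 - Real.log (m : ℝ) := by linarith
    calc ((t - 1 : ℕ) : ℝ) = (((t - 1 : ℕ) : ℝ) / m) * m := by field_simp
      _ ≤ (Real.log N0 - Real.log (m : ℝ)) * m :=
          mul_le_mul_of_nonneg_right h2 (le_of_lt hm0R)
  -- final assembly
  have hkR : (k : ℝ) ≤ ((t - 1 : ℕ) : ℝ) + (m : ℝ) := by
    have hnat : k ≤ (t - 1) + m := by omega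
    calc (k : ℝ) ≤ (((t - 1) + m : ℕ) : ℝ) := by exact_mod_cast hnat
      _ = ((t - 1 : ℕ) : ℝ) + (m : ℝ) := by push_cast; ring
  calc (L.length : ℝ) = (k : ℝ) := by rw [hk]
    _ ≤ ((t - 1 : ℕ) : ℝ) + (m : ℝ) := hkR
    _ ≤ (Real.log N0 - Real.log (m : ℝ)) * m + m := by linarith
    _ = (Real.log N0 - Real.log ((m : ℕ) : ℝ) + 1) * ((m : ℕ) : ℝ) := by ring
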